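/- Let (X_n) be a random walk on ℝ^d with drift μ ≠ 0, finite mgf φ, and u ∈ C = {φ = 1}, u ≠ 0. Then under the h_u-transformed law (tilted increments with law e^{⟨u,x⟩}ν(dx)), h_u(X_n) = e^{⟨u,X_n⟩} → ∞ almost surely, while under the original law h_u(X_n) → 0 almost surely. -/

import Mathlib

open MeasureTheory ProbabilityTheory ENNReal Filter

open scoped RealInnerProductSpace

/-- If `E[e^Y] = 1` and `Y` is not a.s. constant, then `E[Y] < 0`. -/
lemma mean_neg_of_exp_one (ρ : Measure ℝ) [IsProbabilityMeasure ρ]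
    (hint : Integrable id ρ) (hexp : Integrable Real.exp ρ)
    (h1 : ∫ t, Real.exp t ∂ρ = 1) (hnd : ∀ c : ℝ, ρ {c} < 1) :
    (∫ t, t ∂ρ) < 0 := by
  have h := strictConvexOn_exp.ae_eq_const_or_map_average_lt
    Real.continuous_exp.continuousOn isClosed_univ
    (Filter.Eventually.of_forall fun x => Set.mem_univ x) hint hexp
  rcases h with h | h
  · exfalso
    set c := ⨍ t, t ∂ρ with hc
    have : ρ {c} = 1 := by
      have : ∀ᵐ t ∂ρ, t = c := h
      have h2 : ρ ({c} : Set ℝ)ᶜ = 0 := by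
        have h3 := ae_iff.mp this
        convert h3 using 2
        ext a; simp
      exact (prob_compl_eq_zero_iff (measurableSet_singleton c)).mp h2
    exact absurd this (hnd c).ne
  · rw [average_eq_integral, average_eq_integral] at h
    rw [h1] at h
    rw [← Real.exp_lt_one_iff]
    exact h

/-- If `Y i` are pairwise independent, identically distributed, integrable with negative mean,
then `a + ∑_{i<n} Y i → -∞` a.s. -/
lemma walk_tendsto_atBot {Ω : Type*} [MeasurableSpace Ω] (μ : Measure Ω) [IsProbabilityMeasure μ]
    (Y : ℕ → Ω → ℝ) (hint : Integrable (Y 0) μ)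
    (hindep : Pairwise (Function.onFun (IndepFun · · μ) Y))
    (hident : ∀ i, IdentDistrib (Y i) (Y 0) μ μ)
    (hm : ∫ ω, Y 0 ω ∂μ < 0) (a : ℝ) :
    ∀ᵐ ω ∂μ, Tendsto (fun n => a + ∑ i ∈ Finset.range n, Y i ω) atTop atBot := by
  filter_upwards [strong_law_ae_real Y hint hindep hident] with ω hω
  have h1 : Tendsto (fun n : ℕ => (n : ℝ) * ((∑ i ∈ Finset.range n, Y i ω) / n))
      atTop atBot :=
    tendsto_natCast_atTop_atTop.atTop_mul_neg hm hω
  have h2 : Tendsto (fun n : ℕ => ∑ i ∈ Finset.range n, Y i ω) atTop atBot := by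
    refine h1.congr' ?_
    filter_upwards [eventually_gt_atTop 0] with n hn
    have : (n : ℝ) ≠ 0 := Nat.cast_ne_zero.mpr hn.ne'
    field_simp
  simpa using tendsto_atBot_add_const_left _ a h2

lemma abs_le_exp_add (t : ℝ) : |t| ≤ Real.exp t + Real.exp (-t) := by
  rcases abs_cases t with ⟨h, _⟩ | ⟨h, _⟩
  · rw [h]
    calc t ≤ t + 1 := by linarith
    _ ≤ Real.exp t := Real.add_one_le_exp t
    _ ≤ _ := le_add_of_nonneg_right (Real.exp_pos _).le
  · rw [h]
    calc -t ≤ -t + 1 := by linarith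
    _ ≤ Real.exp (-t) := Real.add_one_le_exp (-t)
    _ ≤ _ := le_add_of_nonneg_left (Real.exp_pos _).le

lemma walk_tendsto_atTop {Ω : Type*} [MeasurableSpace Ω] (μ : Measure Ω) [IsProbabilityMeasure μ]
    (Y : ℕ → Ω → ℝ) (hint : Integrable (Y 0) μ)
    (hindep : Pairwise (Function.onFun (IndepFun · · μ) Y))
    (hident : ∀ i, IdentDistrib (Y i) (Y 0) μ μ)
    (hm : 0 < ∫ ω, Y 0 ω ∂μ) (a : ℝ) :
    ∀ᵐ ω ∂μ, Tendsto (fun n => a + ∑ i ∈ Finset.range n, Y i ω) atTop atTop := by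
  have hneg := walk_tendsto_atBot μ (fun i ω => -(Y i ω)) hint.neg
    (fun i j hij => ((hindep hij).comp measurable_neg measurable_neg :))
    (fun i => (hident i).comp measurable_neg)
    (by rw [integral_neg]; linarith) (-a)
  filter_upwards [hneg] with ω hω
  have h2 : Tendsto (fun n => -(a + ∑ i ∈ Finset.range n, Y i ω)) atTop atBot := by
    convert hω using 2 with n
    rw [neg_add, ← Finset.sum_neg_distrib]
  refine Tendsto.congr (fun n => ?_) (tendsto_neg_atBot_atTop.comp h2)
  simp [Function.comp]
/-- For a nondegenerate random walk on `ℝ^d` with increment law `ν`, drift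
`μ = ∫ x ν(dx) ≠ 0`, everywhere finite mgf `φ` and `u ≠ 0` with `φ(u) = 1`:
under the original law `h_u(X_n) = e^{⟨u, X_n⟩} → 0` a.s., while under the
`h_u`-transformed law (i.i.d. increments with the tilted law `e^{⟨u,x⟩} ν(dx)`)
`h_u(X_n) → ∞` a.s. -/
theorem tilted_walk_exp_limits (d : ℕ) (ν : MeasureTheory.Measure (EuclideanSpace ℝ (Fin d)))
    [IsProbabilityMeasure ν]
    (hmgf : ∀ w : EuclideanSpace ℝ (Fin d),
      MeasureTheory.Integrable (fun y => Real.exp ⟪w, y⟫) ν)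
    (hnondeg : ∀ w : EuclideanSpace ℝ (Fin d), w ≠ 0 → ∀ c : ℝ, ν {y | ⟪w, y⟫ = c} < 1)
    (hmean : (∫ y, y ∂ν) ≠ 0)
    (u : EuclideanSpace ℝ (Fin d)) (hu0 : u ≠ 0)
    (hu : ∫ y, Real.exp ⟪u, y⟫ ∂ν = 1)
    -- the original walk: i.i.d. increments `ξ` with law `ν`
    {Ω : Type*} [MeasurableSpace Ω] (μ : MeasureTheory.Measure Ω) [IsProbabilityMeasure μ]
    (ξ : ℕ → Ω → EuclideanSpace ℝ (Fin d)) (hξmeas : ∀ i, Measurable (ξ i))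
    (hξindep : ProbabilityTheory.iIndepFun ξ μ)
    (hξlaw : ∀ i, MeasureTheory.Measure.map (ξ i) μ = ν)
    -- the tilted walk: i.i.d. increments `ξ'` with the tilted law `e^{⟨u,y⟩} ν(dy)`
    {Ω' : Type*} [MeasurableSpace Ω'] (μ' : MeasureTheory.Measure Ω') [IsProbabilityMeasure μ']
    (ξ' : ℕ → Ω' → EuclideanSpace ℝ (Fin d)) (hξ'meas : ∀ i, Measurable (ξ' i))
    (hξ'indep : ProbabilityTheory.iIndepFun ξ' μ')
    (hξ'law : ∀ i, MeasureTheory.Measure.map (ξ' i) μ'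
      = ν.withDensity fun y => ENNReal.ofReal (Real.exp ⟪u, y⟫))
    (x : EuclideanSpace ℝ (Fin d)) :
    (∀ᵐ ω ∂μ, Filter.Tendsto
        (fun n => Real.exp ⟪u, x + ∑ i ∈ Finset.range n, ξ i ω⟫) Filter.atTop (nhds 0))
      ∧ (∀ᵐ ω ∂μ', Filter.Tendsto
        (fun n => Real.exp ⟪u, x + ∑ i ∈ Finset.range n, ξ' i ω⟫) Filter.atTop Filter.atTop) := by
  classical
  have hinner_meas : Measurable fun y : EuclideanSpace ℝ (Fin d) => ⟪u, y⟫ :=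
    (continuous_const.inner continuous_id).measurable
  have hinner_sm : StronglyMeasurable fun y : EuclideanSpace ℝ (Fin d) => ⟪u, y⟫ :=
    (continuous_const.inner continuous_id).stronglyMeasurable
  -- integrability of the inner product under ν
  have hIint : Integrable (fun y : EuclideanSpace ℝ (Fin d) => ⟪u, y⟫) ν := by
    refine Integrable.mono' ((hmgf u).add (hmgf (-u))) hinner_sm.aestronglyMeasurable
      (ae_of_all _ fun y => ?_)
    rw [Real.norm_eq_abs]
    simpa [inner_neg_left] using abs_le_exp_add ⟪u, y⟫
  -- mean of ⟪u,·⟫ under ν is negative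
  have hmean_neg : (∫ y, ⟪u, y⟫ ∂ν) < 0 := by
    set ρ := ν.map (fun y : EuclideanSpace ℝ (Fin d) => ⟪u, y⟫) with hρ
    haveI : IsProbabilityMeasure ρ := Measure.isProbabilityMeasure_map hinner_meas.aemeasurable
    have h1 : (∫ t, t ∂ρ) < 0 := by
      refine mean_neg_of_exp_one ρ ?_ ?_ ?_ ?_
      · exact (integrable_map_measure aestronglyMeasurable_id hinner_meas.aemeasurable).mpr hIint
      · exact (integrable_map_measure Real.continuous_exp.aestronglyMeasurable
          hinner_meas.aemeasurable).mpr (hmgf u)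
      · rw [integral_map hinner_meas.aemeasurable Real.continuous_exp.aestronglyMeasurable]
        exact hu
      · intro c
        rw [hρ, Measure.map_apply hinner_meas (measurableSet_singleton c)]
        exact hnondeg u hu0 c
    have h2 : ∫ t, t ∂ρ = ∫ y, ⟪u, y⟫ ∂ν := by
      rw [hρ]; exact integral_map hinner_meas.aemeasurable aestronglyMeasurable_id
    rwa [h2] at h1
  -- the tilted measure
  set τ := ν.withDensity (fun y => ENNReal.ofReal (Real.exp ⟪u, y⟫)) with hτ
  have hdens_meas : Measurable fun y : EuclideanSpace ℝ (Fin d) => (Real.exp ⟪u, y⟫).toNNReal :=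
    (Real.measurable_exp.comp hinner_meas).real_toNNReal
  have hτeq : τ = ν.withDensity (fun y => ((Real.exp ⟪u, y⟫).toNNReal : ℝ≥0∞)) := rfl
  haveI hτprob : IsProbabilityMeasure τ := by
    constructor
    rw [hτ, withDensity_apply _ MeasurableSet.univ, Measure.restrict_univ,
      ← ofReal_integral_eq_lintegral_ofReal (hmgf u) (ae_of_all _ fun y => (Real.exp_pos _).le),
      hu, ENNReal.ofReal_one]
  -- integrability of the inner product under τ
  have hsmul_eq : ∀ (g : EuclideanSpace ℝ (Fin d) → ℝ) (y : EuclideanSpace ℝ (Fin d)),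
      ((Real.exp ⟪u, y⟫).toNNReal : NNReal) • g y = Real.exp ⟪u, y⟫ * g y := by
    intro g y
    rw [NNReal.smul_def, Real.coe_toNNReal _ (Real.exp_pos _).le, smul_eq_mul]
  have hτint_iff : ∀ g : EuclideanSpace ℝ (Fin d) → ℝ, Integrable g τ ↔
      Integrable (fun y => Real.exp ⟪u, y⟫ * g y) ν := by
    intro g
    rw [hτeq, integrable_withDensity_iff_integrable_smul hdens_meas]
    exact integrable_congr (ae_of_all _ fun y => hsmul_eq g y)
  have hτint_eq : ∀ g : EuclideanSpace ℝ (Fin d) → ℝ,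
      ∫ y, g y ∂τ = ∫ y, Real.exp ⟪u, y⟫ * g y ∂ν := by
    intro g
    rw [hτeq, integral_withDensity_eq_integral_smul hdens_meas]
    refine integral_congr_ae (ae_of_all _ fun y => hsmul_eq g y)
  have hτIint : Integrable (fun y : EuclideanSpace ℝ (Fin d) => ⟪u, y⟫) τ := by
    rw [hτint_iff]
    refine Integrable.mono' ((hmgf ((2:ℝ) • u)).add (integrable_const 1))
      ((Real.continuous_exp.comp (continuous_const.inner continuous_id)).mul
        (continuous_const.inner continuous_id)).aestronglyMeasurable
      (ae_of_all _ fun y => ?_)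
    have hb : Real.exp ⟪u, y⟫ * |⟪u, y⟫| ≤ Real.exp ⟪(2:ℝ) • u, y⟫ + 1 := by
      have h2 : ⟪(2:ℝ) • u, y⟫ = ⟪u, y⟫ + ⟪u, y⟫ := by
        rw [real_inner_smul_left]; ring
      rw [h2, Real.exp_add]
      calc Real.exp ⟪u, y⟫ * |⟪u, y⟫|
          ≤ Real.exp ⟪u, y⟫ * (Real.exp ⟪u, y⟫ + Real.exp (-⟪u, y⟫)) :=
            mul_le_mul_of_nonneg_left (abs_le_exp_add _) (Real.exp_pos _).le
        _ = Real.exp ⟪u, y⟫ * Real.exp ⟪u, y⟫ + 1 := by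
            rw [mul_add, ← Real.exp_add ⟪u, y⟫ (-⟪u, y⟫), add_neg_cancel, Real.exp_zero]
    simpa [Real.norm_eq_abs, abs_mul, Real.abs_exp] using hb
  -- mean of ⟪u,·⟫ under τ is positive
  have hτmean_pos : 0 < ∫ y, ⟪u, y⟫ ∂τ := by
    have hnegmeas : Measurable fun y : EuclideanSpace ℝ (Fin d) => -⟪u, y⟫ := hinner_meas.neg
    set ρ' := τ.map (fun y : EuclideanSpace ℝ (Fin d) => -⟪u, y⟫) with hρ'
    haveI : IsProbabilityMeasure ρ' := Measure.isProbabilityMeasure_map hnegmeas.aemeasurable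
    have hexpτ : Integrable (fun y : EuclideanSpace ℝ (Fin d) => Real.exp (-⟪u, y⟫)) τ := by
      rw [hτint_iff]
      refine (integrable_const (1:ℝ)).congr (ae_of_all _ fun y => ?_)
      show (1:ℝ) = Real.exp ⟪u, y⟫ * Real.exp (-⟪u, y⟫)
      rw [← Real.exp_add, add_neg_cancel, Real.exp_zero]
    have hexpτ1 : ∫ y, Real.exp (-⟪u, y⟫) ∂τ = 1 := by
      rw [hτint_eq]
      have : ∀ y : EuclideanSpace ℝ (Fin d),
          Real.exp ⟪u, y⟫ * Real.exp (-⟪u, y⟫) = 1 := fun y => by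
        rw [← Real.exp_add, add_neg_cancel, Real.exp_zero]
      rw [integral_congr_ae (ae_of_all _ this)]
      simp
    have h1 : (∫ t, t ∂ρ') < 0 := by
      refine mean_neg_of_exp_one ρ' ?_ ?_ ?_ ?_
      · exact (integrable_map_measure aestronglyMeasurable_id hnegmeas.aemeasurable).mpr hτIint.neg
      · refine (integrable_map_measure Real.continuous_exp.aestronglyMeasurable
          hnegmeas.aemeasurable).mpr hexpτ
      · rw [integral_map hnegmeas.aemeasurable Real.continuous_exp.aestronglyMeasurable]
        exact hexpτ1
      · intro c
        rw [hρ', Measure.map_apply hnegmeas (measurableSet_singleton c)]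
        have hsetq : (fun y : EuclideanSpace ℝ (Fin d) => -⟪u, y⟫) ⁻¹' {c} = {y : EuclideanSpace ℝ (Fin d) | ⟪u, y⟫ = -c} := by
          ext y; simp [neg_eq_iff_eq_neg]
        rw [hsetq]
        set s : Set (EuclideanSpace ℝ (Fin d)) := {y : EuclideanSpace ℝ (Fin d) | ⟪u, y⟫ = -c} with hs
        have hsmeas : MeasurableSet s := hinner_meas (measurableSet_singleton (-c))
        have hνsc : ν sᶜ ≠ 0 := by
          intro h0
          exact absurd ((prob_compl_eq_zero_iff hsmeas).mp h0) (hnondeg u hu0 (-c)).ne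
        have hτsc : τ sᶜ ≠ 0 := by
          intro h0
          rw [hτ, withDensity_apply _ hsmeas.compl] at h0
          have hae := (lintegral_eq_zero_iff
            ((Real.measurable_exp.comp hinner_meas).ennreal_ofReal)).mp h0
          have : (ν.restrict sᶜ) {y : EuclideanSpace ℝ (Fin d) | ¬ (ENNReal.ofReal (Real.exp ⟪u, y⟫) = 0)} = 0 :=
            hae
          rw [show {y : EuclideanSpace ℝ (Fin d) | ¬ (ENNReal.ofReal (Real.exp ⟪u, y⟫) = 0)} = Set.univ by
              ext y; simp [ENNReal.ofReal_eq_zero, not_le, Real.exp_pos],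
            Measure.restrict_apply_univ] at this
          exact hνsc this
        refine lt_of_le_of_ne prob_le_one fun h1 => ?_
        exact hτsc ((prob_compl_eq_zero_iff hsmeas).mpr h1)
    have h2 : ∫ t, t ∂ρ' = ∫ y, -⟪u, y⟫ ∂τ := by
      rw [hρ']; exact integral_map hnegmeas.aemeasurable aestronglyMeasurable_id
    rw [h2, integral_neg] at h1
    linarith
  -- transfer lemmas for walks
  constructor
  · -- original walk
    set Y : ℕ → Ω → ℝ := fun i ω => ⟪u, ξ i ω⟫ with hY
    have hYint : Integrable (Y 0) μ := by
      have h : Integrable (fun y : EuclideanSpace ℝ (Fin d) => ⟪u, y⟫) (Measure.map (ξ 0) μ) := by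
        rw [hξlaw 0]; exact hIint
      exact (integrable_map_measure hinner_sm.aestronglyMeasurable
        (hξmeas 0).aemeasurable).mp h
    have hYmean : ∫ ω, Y 0 ω ∂μ < 0 := by
      have h : ∫ ω, Y 0 ω ∂μ = ∫ y, ⟪u, y⟫ ∂(Measure.map (ξ 0) μ) :=
        (integral_map (hξmeas 0).aemeasurable hinner_sm.aestronglyMeasurable).symm
      rw [h, hξlaw 0]
      exact hmean_neg
    have key := walk_tendsto_atBot μ Y hYint
      (fun i j hij => (hξindep.indepFun hij).comp hinner_meas hinner_meas)
      (fun i => IdentDistrib.comp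
        ⟨(hξmeas i).aemeasurable, (hξmeas 0).aemeasurable, by rw [hξlaw i, hξlaw 0]⟩
        hinner_meas)
      hYmean ⟪u, x⟫
    filter_upwards [key] with ω hω
    have := Real.tendsto_exp_atBot.comp hω
    refine this.congr fun n => ?_
    simp only [Function.comp]
    congr 1
    rw [inner_add_right, inner_sum]
  · -- tilted walk
    set Y : ℕ → Ω' → ℝ := fun i ω => ⟪u, ξ' i ω⟫ with hY
    have hYint : Integrable (Y 0) μ' := by
      have h : Integrable (fun y : EuclideanSpace ℝ (Fin d) => ⟪u, y⟫) (Measure.map (ξ' 0) μ') := by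
        rw [hξ'law 0]; exact hτIint
      exact (integrable_map_measure hinner_sm.aestronglyMeasurable
        (hξ'meas 0).aemeasurable).mp h
    have hYmean : 0 < ∫ ω, Y 0 ω ∂μ' := by
      have h : ∫ ω, Y 0 ω ∂μ' = ∫ y, ⟪u, y⟫ ∂(Measure.map (ξ' 0) μ') :=
        (integral_map (hξ'meas 0).aemeasurable hinner_sm.aestronglyMeasurable).symm
      rw [h, hξ'law 0]
      exact hτmean_pos
    have key := walk_tendsto_atTop μ' Y hYint
      (fun i j hij => (hξ'indep.indepFun hij).comp hinner_meas hinner_meas)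
      (fun i => IdentDistrib.comp
        ⟨(hξ'meas i).aemeasurable, (hξ'meas 0).aemeasurable, by rw [hξ'law i, hξ'law 0]⟩
        hinner_meas)
      hYmean ⟪u, x⟫
    filter_upwards [key] with ω hω
    have := Real.tendsto_exp_atTop.comp hω
    refine this.congr fun n => ?_
    simp only [Function.comp]
    congr 1
    rw [inner_add_right, inner_sum]
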